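/- Let V : [0,∞) → ℝ be measurable with sup_{x≥0} ∫_x^{x+1} |V(t)| dt < ∞. Then for each z ∈ ℂ with Im z > 0, one has u(x,z) ≠ 0 for all x > 0 and sup_{x ≥ 1} | (∂_x u)(x,z) / u(x,z) | < ∞. -/

import Mathlib

set_option maxHeartbeats 1000000

open MeasureTheory

/-- `u` is the Dirichlet solution for potential `V` at energy `z`: `u ∈ W^{2,1}_loc([0,∞))`,
`-u'' + V u = z u` a.e. (encoded in integrated form), `u(0) = 0`, `u'(0) = 1`. -/
def IsDirichlet (V : ℝ → ℝ) (z : ℂ) (u u' : ℝ → ℂ) : Prop :=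
  u 0 = 0 ∧ u' 0 = 1 ∧
  (∀ x, 0 ≤ x → HasDerivWithinAt u (u' x) (Set.Ici 0) x) ∧
  (∀ x, 0 ≤ x → u' x = 1 + ∫ t in (0:ℝ)..x, ((V t : ℂ) - z) * u t)

/-- for a uniformly locally integrable potential and `Im z > 0`, the
Dirichlet solution satisfies `u(x,z) ≠ 0` for all `x > 0` and
`sup_{x ≥ 1} |(∂ₓu)(x,z)/u(x,z)| < ∞`. -/
theorem bounded_log_derivative (V : ℝ → ℝ) (hVmeas : Measurable V)
    (hVloc : ∀ x : ℝ, MeasureTheory.IntegrableOn V (Set.Icc 0 x))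
    (hVbdd : ∃ C : ℝ, ∀ x : ℝ, 0 ≤ x → (∫ t in x..(x + 1), |V t|) ≤ C)
    (z : ℂ) (hz : 0 < z.im)
    (u u' : ℝ → ℂ) (hu : IsDirichlet V z u u') :
    (∀ x : ℝ, 0 < x → u x ≠ 0) ∧
    ∃ B : ℝ, ∀ x : ℝ, 1 ≤ x → ‖u' x / u x‖ ≤ B := by
  obtain ⟨hu0, hu'0, hderiv, hint⟩ := hu
  set g : ℝ → ℂ := fun t => ((V t : ℂ) - z) * u t with hg
  have hucont : ContinuousOn u (Set.Ici 0) := fun x hx =>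
    (hderiv x hx).continuousWithinAt
  have hmax : ∀ t : ℝ, max t 0 ∈ Set.Ici (0:ℝ) := fun t => Set.mem_Ici.2 (le_max_right _ _)
  have hUcont : Continuous (fun t => u (max t 0)) :=
    hucont.comp_continuous (continuous_id.max continuous_const) hmax
  have hUeq : ∀ t, 0 ≤ t → u (max t 0) = u t := fun t ht => by rw [max_eq_left ht]
  -- integrability of g on [0,b]
  have hgint : ∀ b : ℝ, IntegrableOn g (Set.Icc 0 b) := by
    intro b
    rcases le_or_gt 0 b with hb | hb
    · have hV2 : IntegrableOn (fun t => ((V t : ℂ) - z)) (Set.Icc 0 b) := by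
        refine ((hVloc b).ofReal.sub (integrableOn_const ?_))
        exact measure_Icc_lt_top.ne
      have humeas : AEStronglyMeasurable u (volume.restrict (Set.Icc 0 b)) := by
        refine (hUcont.aestronglyMeasurable).congr ?_
        filter_upwards [ae_restrict_mem measurableSet_Icc] with t ht
        exact hUeq t ht.1
      obtain ⟨Cb, hCb⟩ := isCompact_Icc.exists_bound_of_continuousOn
        (hucont.mono (fun t (ht : t ∈ Set.Icc 0 b) => ht.1))
      have h2 := hV2.bdd_mul (c := Cb) humeas ?_
      · exact h2.congr (by
          filter_upwards with t
          simp only [hg]; ring)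
      · filter_upwards [ae_restrict_mem measurableSet_Icc] with t ht
        exact hCb t ht
    · rw [Set.Icc_eq_empty (by linarith)]
      exact integrableOn_empty
  -- interval integrability of g
  have hgii : ∀ a b : ℝ, 0 ≤ a → 0 ≤ b → IntervalIntegrable g volume a b := by
    intro a b ha hb
    rcases le_total a b with h | h
    · refine ((hgint b).mono_set ?_).intervalIntegrable
      rw [Set.uIcc_of_le h]; exact Set.Icc_subset_Icc ha le_rfl
    · refine ((hgint a).mono_set ?_).intervalIntegrable
      rw [Set.uIcc_of_ge h]; exact Set.Icc_subset_Icc hb le_rfl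
  have hu'eq : ∀ a b : ℝ, 0 ≤ a → 0 ≤ b → u' b - u' a = ∫ t in a..b, g t := by
    intro a b ha hb
    rw [hint a ha, hint b hb]
    have : (1 + ∫ t in (0:ℝ)..b, g t) - (1 + ∫ t in (0:ℝ)..a, g t)
        = (∫ t in (0:ℝ)..b, g t) - ∫ t in (0:ℝ)..a, g t := by ring
    rw [this, intervalIntegral.integral_interval_sub_left (hgii 0 b le_rfl hb) (hgii 0 a le_rfl ha)]
  have hu'cont : ContinuousOn u' (Set.Ici 0) := by
    intro x hx
    have h1 : ContinuousOn (fun y => 1 + ∫ t in (0:ℝ)..y, g t) (Set.Icc 0 (x+1)) := by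
      rw [show Set.Icc (0:ℝ) (x+1) = Set.uIcc 0 (x+1) from
        (Set.uIcc_of_le (by linarith [hx.out])).symm]
      refine continuousOn_const.add (intervalIntegral.continuousOn_primitive_interval ?_)
      rw [Set.uIcc_of_le (by linarith [hx.out])]
      exact hgint (x+1)
    have h2 : ContinuousWithinAt u' (Set.Icc 0 (x+1)) x :=
      (h1.congr fun y hy => hint y hy.1) x ⟨hx.out, by linarith [hx.out]⟩
    refine h2.mono_of_mem_nhdsWithin ?_
    refine Filter.mem_of_superset
      (Filter.inter_mem self_mem_nhdsWithin
        (mem_nhdsWithin_of_mem_nhds (Iio_mem_nhds (show x < x+1 by linarith)))) ?_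
    exact fun y hy => ⟨hy.1, le_of_lt hy.2⟩
  have hu'ii : ∀ a b : ℝ, 0 ≤ a → 0 ≤ b → IntervalIntegrable u' volume a b := by
    intro a b ha hb
    apply ContinuousOn.intervalIntegrable
    refine hu'cont.mono ?_
    rcases le_total a b with h|h
    · rw [Set.uIcc_of_le h]; exact fun y hy => le_trans ha hy.1
    · rw [Set.uIcc_of_ge h]; exact fun y hy => le_trans hb hy.1
  have hFTC : ∀ a b : ℝ, 0 ≤ a → a ≤ b → (∫ t in a..b, u' t) = u b - u a := by
    intro a b ha hab
    refine intervalIntegral.integral_eq_sub_of_hasDeriv_right_of_le hab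
      (hucont.mono fun y hy => le_trans ha hy.1) (fun t ht => ?_)
      (hu'ii a b ha (le_trans ha hab))
    exact (hderiv t (le_trans ha ht.1.le)).mono
      (fun y hy => le_of_lt (lt_of_le_of_lt (le_trans ha ht.1.le) hy))
  -- bounded continuous times integrable
  have hbddmul : ∀ (h : ℝ → ℂ) (f : ℝ → ℂ) (b : ℝ), 0 ≤ b → ContinuousOn h (Set.Ici 0) →
      IntegrableOn f (Set.Icc 0 b) → IntegrableOn (fun t => h t * f t) (Set.Icc 0 b) := by
    intro h f b hb hhc hfi
    have hHcont : Continuous (fun t => h (max t 0)) :=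
      hhc.comp_continuous (continuous_id.max continuous_const) hmax
    have hhmeas : AEStronglyMeasurable h (volume.restrict (Set.Icc 0 b)) := by
      refine (hHcont.aestronglyMeasurable).congr ?_
      filter_upwards [ae_restrict_mem measurableSet_Icc] with t ht
      rw [max_eq_left ht.1]
    obtain ⟨Cb, hCb⟩ := isCompact_Icc.exists_bound_of_continuousOn
      (hhc.mono (fun t (ht : t ∈ Set.Icc 0 b) => ht.1))
    refine hfi.bdd_mul (c := Cb) hhmeas ?_
    filter_upwards [ae_restrict_mem measurableSet_Icc] with t ht
    exact hCb t ht
  -- THE KEY FUBINI IDENTITY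
  have key : ∀ x : ℝ, 0 ≤ x → (∫ t in (0:ℝ)..x, (starRingEnd ℂ) (u t) * g t)
      = (starRingEnd ℂ) (u x) * u' x - ∫ s in Set.Ioc (0:ℝ) x, (starRingEnd ℂ) (u' s) * u' s := by
    intro x hx
    set ν := volume.restrict (Set.Ioc (0:ℝ) x) with hν
    set f : ℝ → ℝ → ℂ := fun t s => if s ≤ t then (starRingEnd ℂ) (u' s) * g t else 0 with hf
    have hconjcont : ContinuousOn (fun s => (starRingEnd ℂ) (u' s)) (Set.Ici 0) :=
      Complex.continuous_conj.comp_continuousOn hu'cont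
    have hswap : (∫ t, (∫ s, f t s ∂ν) ∂ν) = ∫ s, (∫ t, f t s ∂ν) ∂ν := by
      apply MeasureTheory.integral_integral_swap
      have hD : MeasurableSet {p : ℝ × ℝ | p.2 ≤ p.1} :=
        measurableSet_le measurable_snd measurable_fst
      have h1 : Integrable g ν := (hgint x).mono_set Set.Ioc_subset_Icc_self
      have h2 : Integrable (fun s => (starRingEnd ℂ) (u' s)) ν :=
        ((hconjcont.mono (fun y (hy : y ∈ Set.Icc 0 x) => hy.1)).integrableOn_compact
          isCompact_Icc).mono_set Set.Ioc_subset_Icc_self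
      have hφ : Integrable (fun p : ℝ × ℝ => (starRingEnd ℂ) (u' p.2) * g p.1) (ν.prod ν) :=
        (h1.mul_prod h2).congr (by filter_upwards with p; ring)
      have huncurry : Function.uncurry f = Set.indicator {p : ℝ × ℝ | p.2 ≤ p.1}
          (fun p => (starRingEnd ℂ) (u' p.2) * g p.1) := by
        funext p
        by_cases h : p.2 ≤ p.1 <;>
          simp [Function.uncurry, hf, Set.indicator_apply, h, Set.mem_setOf_eq]
      rw [huncurry]
      exact hφ.indicator hD
    have hL : ∀ t ∈ Set.Ioc (0:ℝ) x, (∫ s, f t s ∂ν) = (starRingEnd ℂ) (u t) * g t := by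
      intro t ht
      have e1 : (fun s => f t s) = Set.indicator (Set.Iic t)
          (fun s => (starRingEnd ℂ) (u' s) * g t) := by
        funext s
        by_cases h : s ≤ t <;> simp [hf, Set.indicator_apply, h]
      rw [e1, MeasureTheory.integral_indicator measurableSet_Iic, hν,
        Measure.restrict_restrict measurableSet_Iic]
      have e2 : Set.Iic t ∩ Set.Ioc 0 x = Set.Ioc 0 t := by
        ext s
        simp only [Set.mem_inter_iff, Set.mem_Iic, Set.mem_Ioc]
        exact ⟨fun ⟨h1, h2, h3⟩ => ⟨h2, h1⟩, fun ⟨h1, h2⟩ => ⟨h2, h1, le_trans h2 ht.2⟩⟩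
      rw [e2, integral_mul_const]
      have e3 : (∫ s in Set.Ioc 0 t, (starRingEnd ℂ) (u' s)) = (starRingEnd ℂ) (u t) := by
        rw [integral_conj, ← intervalIntegral.integral_of_le ht.1.le,
          hFTC 0 t le_rfl ht.1.le, hu0, sub_zero]
      rw [e3]
    have hR : ∀ s ∈ Set.Ioc (0:ℝ) x, (∫ t, f t s ∂ν)
        = (starRingEnd ℂ) (u' s) * (u' x - u' s) := by
      intro s hs
      have e1 : (fun t => f t s) = Set.indicator (Set.Ici s)
          (fun t => (starRingEnd ℂ) (u' s) * g t) := by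
        funext t
        by_cases h : s ≤ t <;> simp [hf, Set.indicator_apply, h]
      rw [e1, MeasureTheory.integral_indicator measurableSet_Ici, hν,
        Measure.restrict_restrict measurableSet_Ici]
      have e2 : Set.Ici s ∩ Set.Ioc 0 x = Set.Icc s x := by
        ext t
        simp only [Set.mem_inter_iff, Set.mem_Ici, Set.mem_Ioc, Set.mem_Icc]
        exact ⟨fun ⟨h1, h2, h3⟩ => ⟨h1, h3⟩, fun ⟨h1, h2⟩ => ⟨h1, lt_of_lt_of_le hs.1 h1, h2⟩⟩
      rw [e2, MeasureTheory.integral_Icc_eq_integral_Ioc, MeasureTheory.integral_const_mul,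
        ← intervalIntegral.integral_of_le hs.2, ← hu'eq s x hs.1.le hx]
    have hA : Integrable (fun s => (starRingEnd ℂ) (u' s) * u' x) ν :=
      (((hconjcont.mono (fun y (hy : y ∈ Set.Icc 0 x) => hy.1)).mul
        continuousOn_const).integrableOn_compact isCompact_Icc).mono_set Set.Ioc_subset_Icc_self
    have hB : Integrable (fun s => (starRingEnd ℂ) (u' s) * u' s) ν :=
      (((hconjcont.mono (fun y (hy : y ∈ Set.Icc 0 x) => hy.1)).mul
        (hu'cont.mono (fun y (hy : y ∈ Set.Icc 0 x) => hy.1))).integrableOn_compact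
        isCompact_Icc).mono_set Set.Ioc_subset_Icc_self
    calc (∫ t in (0:ℝ)..x, (starRingEnd ℂ) (u t) * g t)
        = ∫ t in Set.Ioc 0 x, (starRingEnd ℂ) (u t) * g t :=
          intervalIntegral.integral_of_le hx
      _ = ∫ t, (∫ s, f t s ∂ν) ∂ν :=
          (setIntegral_congr_fun measurableSet_Ioc (fun t ht => (hL t ht).symm))
      _ = ∫ s, (∫ t, f t s ∂ν) ∂ν := hswap
      _ = ∫ s in Set.Ioc (0:ℝ) x, (starRingEnd ℂ) (u' s) * (u' x - u' s) :=
          setIntegral_congr_fun measurableSet_Ioc hR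
      _ = (∫ s in Set.Ioc (0:ℝ) x, (starRingEnd ℂ) (u' s) * u' x)
          - ∫ s in Set.Ioc (0:ℝ) x, (starRingEnd ℂ) (u' s) * u' s := by
          rw [← integral_sub hA hB]
          congr 1; funext s; ring
      _ = (starRingEnd ℂ) (u x) * u' x
          - ∫ s in Set.Ioc (0:ℝ) x, (starRingEnd ℂ) (u' s) * u' s := by
          rw [integral_mul_const, integral_conj, ← intervalIntegral.integral_of_le hx,
            hFTC 0 x le_rfl hx, hu0, sub_zero]
  -- integrability of conj u' * u' on Ioc 0 x
  have hBint : ∀ x : ℝ, 0 ≤ x →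
      IntegrableOn (fun s => (starRingEnd ℂ) (u' s) * u' s) (Set.Ioc 0 x) := by
    intro x hx
    exact (((Complex.continuous_conj.comp_continuousOn hu'cont).mul hu'cont).mono
      (fun y (hy : y ∈ Set.Icc 0 x) => hy.1)).integrableOn_compact isCompact_Icc
      |>.mono_set Set.Ioc_subset_Icc_self
  have hugint : ∀ x : ℝ, 0 ≤ x →
      IntegrableOn (fun t => (starRingEnd ℂ) (u t) * g t) (Set.Ioc 0 x) := by
    intro x hx
    exact (hbddmul _ g x hx (Complex.continuous_conj.comp_continuousOn hucont)
      ((hgint x))).mono_set Set.Ioc_subset_Icc_self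
  -- pointwise imaginary part
  have hptim : ∀ t : ℝ, ((starRingEnd ℂ) (u t) * g t).im = -(z.im * ‖u t‖^2) := by
    intro t
    have e1 : (starRingEnd ℂ) (u t) * g t = ((V t : ℂ) - z) * ((starRingEnd ℂ) (u t) * u t) := by
      simp only [hg]; ring
    have e2 : (starRingEnd ℂ) (u t) * u t = (Complex.normSq (u t) : ℝ) := by
      rw [mul_comm, Complex.mul_conj]
    have e3 : (((V t : ℂ) - z) * (Complex.normSq (u t) : ℝ)).im
        = -(z.im) * Complex.normSq (u t) := by
      simp [Complex.mul_im]
    rw [e1, e2, e3, Complex.normSq_eq_norm_sq]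
    ring
  -- THE IMAGINARY PART IDENTITY
  have hIm : ∀ x : ℝ, 0 ≤ x →
      ((starRingEnd ℂ) (u x) * u' x).im = -(z.im * ∫ t in (0:ℝ)..x, ‖u t‖^2) := by
    intro x hx
    have h2 : (starRingEnd ℂ) (u x) * u' x
        = (∫ t in (0:ℝ)..x, (starRingEnd ℂ) (u t) * g t)
          + ∫ s in Set.Ioc (0:ℝ) x, (starRingEnd ℂ) (u' s) * u' s := by
      rw [key x hx]; ring
    rw [h2, Complex.add_im]
    have h3 : (∫ s in Set.Ioc (0:ℝ) x, (starRingEnd ℂ) (u' s) * u' s).im = 0 := by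
      rw [← RCLike.im_to_complex, ← integral_im (hBint x hx)]
      refine integral_eq_zero_of_ae (Filter.Eventually.of_forall fun s => ?_)
      simp [RCLike.im_to_complex, Complex.mul_im]
      ring
    rw [h3, add_zero, intervalIntegral.integral_of_le hx,
      ← RCLike.im_to_complex, ← integral_im (hugint x hx)]
    rw [intervalIntegral.integral_of_le hx]
    simp_rw [RCLike.im_to_complex, hptim]
    rw [MeasureTheory.integral_neg]
    rw [MeasureTheory.integral_const_mul]
  -- u nonzero near 0
  have hnear : ∃ ε > 0, ∀ t : ℝ, 0 < t → t < ε → u t ≠ 0 := by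
    have h0 := hderiv 0 le_rfl
    rw [hasDerivWithinAt_iff_tendsto_slope] at h0
    have hIci : Set.Ici (0:ℝ) \ {0} = Set.Ioi 0 := by
      ext t
      simp only [Set.mem_diff, Set.mem_Ici, Set.mem_singleton_iff, Set.mem_Ioi]
      constructor
      · rintro ⟨h1, h2⟩; exact lt_of_le_of_ne h1 (Ne.symm h2)
      · intro h; exact ⟨h.le, ne_of_gt h⟩
    rw [hIci, hu'0] at h0
    have hne := h0.eventually_ne (show (1:ℂ) ≠ 0 by norm_num)
    rw [eventually_nhdsWithin_iff, Metric.eventually_nhds_iff] at hne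
    obtain ⟨ε, hε, h⟩ := hne
    refine ⟨ε, hε, fun t ht1 ht2 h0' => ?_⟩
    have hd : dist t 0 < ε := by
      rw [Real.dist_eq, sub_zero, abs_of_pos ht1]; exact ht2
    exact h hd ht1 (by simp [slope, hu0, h0'])
  -- positivity of the L² integral
  have hsqii : ∀ a b : ℝ, 0 ≤ a → 0 ≤ b → IntervalIntegrable (fun t => ‖u t‖^2) volume a b := by
    intro a b ha hb
    apply ContinuousOn.intervalIntegrable
    refine ((hucont.norm.pow 2).mono ?_)
    rcases le_total a b with h|h
    · rw [Set.uIcc_of_le h]; exact fun y hy => le_trans ha hy.1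
    · rw [Set.uIcc_of_ge h]; exact fun y hy => le_trans hb hy.1
  have hL2pos : ∀ x : ℝ, 0 < x → 0 < ∫ t in (0:ℝ)..x, ‖u t‖^2 := by
    intro x hx
    obtain ⟨ε, hε, hne⟩ := hnear
    set b := min x ε with hb
    have hb0 : 0 < b := lt_min hx hε
    have hmid : 0 < ∫ t in (b/2)..b, ‖u t‖^2 := by
      apply intervalIntegral.intervalIntegral_pos_of_pos_on
        (hsqii (b/2) b (by linarith) (by linarith))
      · intro t ht
        have ht1 : 0 < t := lt_trans (by linarith) ht.1
        have ht2 : t < ε := lt_of_lt_of_le ht.2 (min_le_right _ _)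
        exact pow_pos (norm_pos_iff.2 (hne t ht1 ht2)) 2
      · linarith
    have hsub : (∫ t in (b/2)..b, ‖u t‖^2) ≤ ∫ t in (0:ℝ)..x, ‖u t‖^2 := by
      apply intervalIntegral.integral_mono_interval (c := 0) (d := x) (by linarith)
        (by linarith) (min_le_left _ _)
      · filter_upwards with t
        positivity
      · exact hsqii 0 x le_rfl hx.le
    linarith
  -- lower bound |u||u'| ≥ Im z ∫ |u|²
  have hlow : ∀ x : ℝ, 0 ≤ x →
      z.im * ∫ t in (0:ℝ)..x, ‖u t‖^2 ≤ ‖u x‖ * ‖u' x‖ := by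
    intro x hx
    calc z.im * ∫ t in (0:ℝ)..x, ‖u t‖^2
        = -(((starRingEnd ℂ) (u x) * u' x).im) := by rw [hIm x hx]; ring
      _ ≤ |((starRingEnd ℂ) (u x) * u' x).im| := neg_le_abs _
      _ ≤ ‖(starRingEnd ℂ) (u x) * u' x‖ := Complex.abs_im_le_norm _
      _ = ‖u x‖ * ‖u' x‖ := by
          rw [norm_mul, RCLike.norm_conj]
  -- PART 1
  have part1 : ∀ x : ℝ, 0 < x → u x ≠ 0 := by
    intro x hx hzero
    have h1 := hIm x hx.le
    rw [hzero] at h1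
    simp only [map_zero, zero_mul, Complex.zero_im] at h1
    have h2 := hL2pos x hx
    nlinarith
  obtain ⟨C₀, hC₀⟩ := hVbdd
  set C := max C₀ 0 with hCdef
  have hC0 : 0 ≤ C := le_max_right _ _
  have hVii : ∀ a b : ℝ, 0 ≤ a → a ≤ b → IntervalIntegrable (fun t => |V t|) volume a b := by
    intro a b ha hab
    have h1 := ((hVloc b).mono_set (Set.Icc_subset_Icc ha le_rfl)).norm
    refine IntegrableOn.intervalIntegrable ?_
    rw [Set.uIcc_of_le hab]
    simpa [Real.norm_eq_abs, IntegrableOn] using h1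
  have hCb : ∀ a : ℝ, 0 ≤ a → (∫ t in a..(a+1), |V t|) ≤ C :=
    fun a ha => le_trans (hC₀ a ha) (le_max_left _ _)
  have hVsub : ∀ a b : ℝ, 0 ≤ a → a ≤ b → b ≤ a+1 → (∫ t in a..b, |V t|) ≤ C := by
    intro a b ha hab hb1
    refine le_trans (intervalIntegral.integral_mono_interval le_rfl hab hb1
      (Filter.Eventually.of_forall fun t => abs_nonneg _)
      (hVii a (a+1) ha (by linarith))) (hCb a ha)
  have hgnorm : ∀ a b S' : ℝ, 0 ≤ a → a ≤ b → b ≤ a+1 → (∀ s ∈ Set.Icc a b, ‖u s‖ ≤ S') →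
      (∫ s in a..b, ‖g s‖) ≤ (C + ‖z‖) * S' := by
    intro a b S' ha hab hb1 hS
    have hS0 : 0 ≤ S' := le_trans (norm_nonneg (u a)) (hS a ⟨le_rfl, hab⟩)
    have hp : ∀ s ∈ Set.Icc a b, ‖g s‖ ≤ (|V s| + ‖z‖) * S' := by
      intro s hs
      rw [hg]
      rw [norm_mul]
      refine mul_le_mul ?_ (hS s hs) (norm_nonneg _) (by positivity)
      refine le_trans (norm_sub_le _ _) ?_
      rw [Complex.norm_real, Real.norm_eq_abs]
    have h1 : (∫ s in a..b, ‖g s‖) ≤ ∫ s in a..b, (|V s| + ‖z‖) * S' :=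
      intervalIntegral.integral_mono_on hab ((hgii a b ha (le_trans ha hab)).norm)
        (((hVii a b ha hab).add (intervalIntegrable_const)).mul_const S') hp
    have h2 : (∫ s in a..b, (|V s| + ‖z‖) * S')
        = ((∫ s in a..b, |V s|) + (b-a) * ‖z‖) * S' := by
      rw [intervalIntegral.integral_mul_const,
        intervalIntegral.integral_add (hVii a b ha hab) intervalIntegrable_const,
        intervalIntegral.integral_const]
      simp [smul_eq_mul]
    have h3 := hVsub a b ha hab hb1
    have h4 : (b-a) * ‖z‖ ≤ ‖z‖ := by nlinarith [norm_nonneg z]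
    have h5 : ((∫ s in a..b, |V s|) + (b-a) * ‖z‖) * S' ≤ (C + ‖z‖) * S' :=
      mul_le_mul_of_nonneg_right (by linarith) hS0
    linarith [h1, h2.le, h2.ge, h5]
  -- derivative bound at endpoints of quarter-intervals
  have hu'S : ∀ a t S' : ℝ, 0 ≤ a → (t = a ∨ t = a + 4⁻¹) →
      (∀ s ∈ Set.Icc a (a+4⁻¹), ‖u s‖ ≤ S') → ‖u' t‖ ≤ (8 + C + ‖z‖) * S' := by
    intro a t S' ha ht hb
    set b := a + 4⁻¹ with hbdef
    have hab : a ≤ b := by rw [hbdef]; linarith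
    have hb0 : 0 ≤ b := le_trans ha hab
    have ht0 : 0 ≤ t := by rcases ht with h|h <;> rw [h] <;> [exact ha; exact hb0]
    have htIcc : t ∈ Set.Icc a b := by
      rcases ht with h|h <;> rw [h] <;> constructor <;> first | exact le_rfl | exact hab
    have hS0 : 0 ≤ S' := le_trans (norm_nonneg (u a)) (hb a ⟨le_rfl, hab⟩)
    have hgb : (∫ s in a..b, ‖g s‖) ≤ (C + ‖z‖) * S' :=
      hgnorm a b S' ha hab (by rw [hbdef]; linarith) hb
    have htuIcc : t ∈ Set.uIcc a b := by rw [Set.uIcc_of_le hab]; exact htIcc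
    have hcont_int : IntervalIntegrable (fun s => ∫ y in t..s, g y) volume a b := by
      apply ContinuousOn.intervalIntegrable
      rw [Set.uIcc_of_le hab]
      rw [show Set.Icc a b = Set.uIcc a b from (Set.uIcc_of_le hab).symm]
      exact intervalIntegral.continuousOn_primitive_interval' (hgii a b ha hb0) htuIcc
    have e1 : (∫ s in a..b, u' s) = ∫ s in a..b, (u' t + ∫ y in t..s, g y) := by
      apply intervalIntegral.integral_congr
      intro s hs
      rw [Set.uIcc_of_le hab] at hs
      have hs0 : 0 ≤ s := le_trans ha hs.1
      show u' s = u' t + ∫ y in t..s, g y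
      exact sub_eq_iff_eq_add'.mp (hu'eq t s ht0 hs0)
    have e2 : (∫ s in a..b, (u' t + ∫ y in t..s, g y))
        = (b - a) • u' t + ∫ s in a..b, (∫ y in t..s, g y) := by
      rw [intervalIntegral.integral_add intervalIntegrable_const hcont_int,
        intervalIntegral.integral_const]
    have hnormh : ∀ s ∈ Set.uIoc a b, ‖∫ y in t..s, g y‖ ≤ (C + ‖z‖) * S' := by
      intro s hs
      rw [Set.uIoc_of_le hab] at hs
      have hs' : s ∈ Set.Icc a b := ⟨hs.1.le, hs.2⟩
      refine le_trans (intervalIntegral.norm_integral_le_abs_integral_norm) ?_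
      rcases le_total t s with h|h
      · rw [abs_of_nonneg (intervalIntegral.integral_nonneg h (fun y _ => norm_nonneg _))]
        exact le_trans (intervalIntegral.integral_mono_interval htIcc.1 h hs'.2
          (Filter.Eventually.of_forall fun y => norm_nonneg _) ((hgii a b ha hb0).norm)) hgb
      · rw [show (∫ y in t..s, ‖g y‖) = -(∫ y in s..t, ‖g y‖) from
          intervalIntegral.integral_symm _ _, abs_neg,
          abs_of_nonneg (intervalIntegral.integral_nonneg h (fun y _ => norm_nonneg _))]
        exact le_trans (intervalIntegral.integral_mono_interval hs'.1 h htIcc.2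
          (Filter.Eventually.of_forall fun y => norm_nonneg _) ((hgii a b ha hb0).norm)) hgb
    have hIH : ‖∫ s in a..b, (∫ y in t..s, g y)‖ ≤ ((C + ‖z‖) * S') * |b - a| :=
      intervalIntegral.norm_integral_le_of_norm_le_const hnormh
    have hFab : (∫ s in a..b, u' s) = u b - u a := hFTC a b ha hab
    have hcomb : (b - a) • u' t = (u b - u a) - ∫ s in a..b, (∫ y in t..s, g y) := by
      have h6 : u b - u a = (b - a) • u' t + ∫ s in a..b, (∫ y in t..s, g y) := by
        rw [← hFab, e1, e2]
      rw [h6]; ring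
    have hba : b - a = 4⁻¹ := by rw [hbdef]; ring
    have hn1 : ‖(b - a) • u' t‖ = 4⁻¹ * ‖u' t‖ := by
      rw [norm_smul, hba]; norm_num
    have hn2 : ‖(u b - u a) - ∫ s in a..b, (∫ y in t..s, g y)‖
        ≤ S' + S' + ((C + ‖z‖) * S') * 4⁻¹ := by
      refine le_trans (norm_sub_le _ _) ?_
      have := norm_sub_le (u b) (u a)
      have hub : ‖u b‖ ≤ S' := hb b ⟨hab, le_rfl⟩
      have hua : ‖u a‖ ≤ S' := hb a ⟨le_rfl, hab⟩
      rw [hba] at hIH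
      have : |(4:ℝ)⁻¹| = 4⁻¹ := by norm_num
      rw [this] at hIH
      linarith [norm_sub_le (u b) (u a), hIH]
    have : 4⁻¹ * ‖u' t‖ ≤ S' + S' + ((C + ‖z‖) * S') * 4⁻¹ := by
      rw [← hn1, hcomb]; exact hn2
    nlinarith [norm_nonneg (u' t)]
  set K := 8 + C + ‖z‖ with hKdef
  have hK8 : (8:ℝ) ≤ K := by rw [hKdef]; linarith [norm_nonneg z]
  have hK0 : (0:ℝ) < K := by linarith
  set δ := (4*K)⁻¹ with hδdef
  have hδ0 : 0 < δ := by rw [hδdef]; positivity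
  have hδK : K * δ = 4⁻¹ := by rw [hδdef]; field_simp
  have hδ32 : δ ≤ 32⁻¹ := by
    rw [hδdef]
    exact inv_anti₀ (by norm_num) (by linarith)
  have part2 : ∀ x : ℝ, 1 ≤ x → ‖u' x / u x‖ ≤ 16 * K^3 / z.im := by
    intro x hx
    have hx0 : (0:ℝ) < x := by linarith
    set J := Set.Icc (x - 2⁻¹) x with hJdef
    have hJsub : J ⊆ Set.Ici (0:ℝ) := fun s hs => le_trans (by linarith : (0:ℝ) ≤ x - 2⁻¹) hs.1
    have hJne : J.Nonempty := Set.nonempty_Icc.2 (by linarith)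
    obtain ⟨tstar, htsJ, htsmax⟩ :=
      isCompact_Icc.exists_isMaxOn hJne ((hucont.mono hJsub).norm)
    set S := ‖u tstar‖ with hSdef
    have hSb : ∀ s ∈ J, ‖u s‖ ≤ S := fun s hs => htsmax hs
    have hxJ : x ∈ J := ⟨by linarith, le_rfl⟩
    have hS0 : 0 < S := lt_of_lt_of_le (norm_pos_iff.2 (part1 x hx0)) (hSb x hxJ)
    have hu'J : ∀ t ∈ J, ‖u' t‖ ≤ K * S := by
      intro t ht
      rcases le_total t (x - 4⁻¹) with h|h
      · refine hu'S t t S (hJsub ht) (Or.inl rfl) ?_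
        intro s hs
        exact hSb s ⟨by linarith [ht.1, hs.1], by linarith [hs.2]⟩
      · refine hu'S (t - 4⁻¹) t S (by linarith [ht.1] : (0:ℝ) ≤ t - 4⁻¹)
          (Or.inr (by ring)) ?_
        intro s hs
        have hs2 : s ≤ t := by linarith [hs.2]
        exact hSb s ⟨by linarith [hs.1], by linarith [ht.2]⟩
    have hF1 : ‖u' x‖ ≤ K * S := hu'J x hxJ
    have hflat : ∀ s ∈ J, |s - tstar| ≤ δ → S/2 ≤ ‖u s‖ := by
      intro s hs hd
      have hKSδ : K*S*δ = S/4 := by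
        rw [show K*S*δ = (K*δ)*S from by ring, hδK]; ring
      have habs := abs_le.mp hd
      have hdiff : ‖u tstar - u s‖ ≤ K*S*δ := by
        rcases le_total s tstar with h|h
        · rw [← hFTC s tstar (hJsub hs) h]
          refine le_trans (intervalIntegral.norm_integral_le_of_norm_le_const
            (C := K*S) ?_) ?_
          · intro y hy
            rw [Set.uIoc_of_le h] at hy
            exact hu'J y ⟨by linarith [hs.1, hy.1], by linarith [htsJ.2, hy.2]⟩
          · rw [abs_of_nonneg (by linarith : (0:ℝ) ≤ tstar - s)]
            exact mul_le_mul_of_nonneg_left (by linarith [habs.1])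
              (mul_nonneg hK0.le hS0.le)
        · rw [norm_sub_rev, ← hFTC tstar s (hJsub htsJ) h]
          refine le_trans (intervalIntegral.norm_integral_le_of_norm_le_const
            (C := K*S) ?_) ?_
          · intro y hy
            rw [Set.uIoc_of_le h] at hy
            exact hu'J y ⟨by linarith [htsJ.1, hy.1], by linarith [hs.2, hy.2]⟩
          · rw [abs_of_nonneg (by linarith : (0:ℝ) ≤ s - tstar)]
            exact mul_le_mul_of_nonneg_left (by linarith [habs.2])
              (mul_nonneg hK0.le hS0.le)
      have hns : S - K*S*δ ≤ ‖u s‖ := by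
        have h1 := norm_sub_norm_le (u tstar) (u s)
        linarith
      rw [hKSδ] at hns; linarith
    obtain ⟨p, q, hp1, hq1, hpq, hqp, hflatpq⟩ :
        ∃ p q : ℝ, x - 2⁻¹ ≤ p ∧ q ≤ x ∧ p ≤ q ∧ q - p = δ ∧
          ∀ s ∈ Set.Icc p q, S/2 ≤ ‖u s‖ := by
      rcases le_total tstar (x - 4⁻¹) with h|h
      · refine ⟨tstar, tstar + δ, htsJ.1, by linarith, by linarith, by ring, fun s hs => ?_⟩
        refine hflat s ⟨by linarith [htsJ.1, hs.1], by linarith [hs.2]⟩ ?_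
        rw [abs_le]; constructor <;> [linarith [hs.1]; linarith [hs.2]]
      · refine ⟨tstar - δ, tstar, by linarith [h], htsJ.2, by linarith, by ring,
          fun s hs => ?_⟩
        refine hflat s ⟨by linarith [hs.1, h], by linarith [hs.2, htsJ.2]⟩ ?_
        rw [abs_le]; constructor <;> [linarith [hs.1]; linarith [hs.2]]
    have hp0 : (0:ℝ) ≤ p := by linarith
    have hL2ge : δ * (S/2)^2 ≤ ∫ t in (0:ℝ)..x, ‖u t‖^2 := by
      have h1 : (∫ _t in p..q, ((S/2)^2 : ℝ)) ≤ ∫ t in p..q, ‖u t‖^2 := by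
        refine intervalIntegral.integral_mono_on hpq intervalIntegrable_const
          (hsqii p q hp0 (by linarith)) ?_
        intro s hs
        have h2 := hflatpq s hs
        nlinarith [norm_nonneg (u s), hS0]
      have h2 : (∫ _t in p..q, ((S/2)^2 : ℝ)) = δ * (S/2)^2 := by
        rw [intervalIntegral.integral_const, smul_eq_mul, hqp]
      have h3 : (∫ t in p..q, ‖u t‖^2) ≤ ∫ t in (0:ℝ)..x, ‖u t‖^2 :=
        intervalIntegral.integral_mono_interval hp0 hpq hq1
          (Filter.Eventually.of_forall fun t => by positivity) (hsqii 0 x le_rfl hx0.le)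
      linarith
    have hlx := hlow x hx0.le
    have F2 : z.im * (δ * (S/2)^2) ≤ ‖u x‖ * (K * S) :=
      le_trans (mul_le_mul_of_nonneg_left hL2ge hz.le)
        (le_trans hlx (mul_le_mul_of_nonneg_left hF1 (norm_nonneg _)))
    have hux0 : 0 < ‖u x‖ := norm_pos_iff.2 (part1 x hx0)
    rw [norm_div, div_le_iff₀ hux0, div_mul_eq_mul_div, le_div_iff₀ hz]
    have F1' : ‖u' x‖ * z.im ≤ K*S*z.im := mul_le_mul_of_nonneg_right hF1 hz.le
    have A' := mul_le_mul_of_nonneg_left F2 hK0.le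
    have eA : K * (z.im * (δ*(S/2)^2)) = z.im * S^2/16 := by
      rw [show K * (z.im * (δ*(S/2)^2)) = z.im * ((K*δ) * (S/2)^2) from by ring, hδK]
      ring
    rw [eA] at A'
    have A'' := mul_le_mul_of_nonneg_left A' (show (0:ℝ) ≤ 16*K by positivity)
    suffices h : K*S*z.im ≤ 16*K^3*‖u x‖ by linarith
    have e2 : 16 * K * (z.im * S ^ 2 / 16) = (K*S*z.im) * S := by ring
    have e3 : 16 * K * (K * (‖u x‖ * (K * S))) = (16*K^3*‖u x‖) * S := by ring
    rw [e2, e3] at A''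
    exact le_of_mul_le_mul_right A'' hS0
  exact ⟨part1, 16 * K^3 / z.im, part2⟩
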